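/- If G is a graph with ν(G) ≥ n, then the mode of the matching sequence occurs at index ⌊n/2⌋ or later; precisely, m_{⌊n/2⌋−1}(G) < m_{⌊n/2⌋}(G) whenever n ≥ 2. -/

import Mathlib

/-- `M` is a matching of `G`, viewed as a finite set of edges of `G` that are
pairwise vertex-disjoint. -/
def IsMatchingFinset {V : Type*} (G : SimpleGraph V) (M : Finset (Sym2 V)) : Prop :=
  (↑M : Set (Sym2 V)) ⊆ G.edgeSet ∧
    (↑M : Set (Sym2 V)).Pairwise (fun e f => ∀ x, x ∈ e → x ∉ f)

/-- The number of matchings of size `k` in `G`. -/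
noncomputable def matchCount {V : Type*} (G : SimpleGraph V) (k : ℕ) : ℕ :=
  {M : Finset (Sym2 V) | IsMatchingFinset G M ∧ M.card = k}.ncard

section Aux

variable {V : Type*}

lemma IsMatchingFinset.subset {G : SimpleGraph V} {M N : Finset (Sym2 V)}
    (hM : IsMatchingFinset G M) (h : N ⊆ M) : IsMatchingFinset G N :=
  ⟨(Finset.coe_subset.mpr h).trans hM.1, hM.2.mono (Finset.coe_subset.mpr h)⟩

open Classical in
/-- The finset of matchings of `G` of size `j`. -/
noncomputable def matchFinset [Fintype V] (G : SimpleGraph V) (j : ℕ) :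
    Finset (Finset (Sym2 V)) :=
  Finset.univ.filter (fun M => IsMatchingFinset G M ∧ M.card = j)

lemma mem_matchFinset [Fintype V] {G : SimpleGraph V} {j : ℕ} {M : Finset (Sym2 V)} :
    M ∈ matchFinset G j ↔ IsMatchingFinset G M ∧ M.card = j := by
  simp [matchFinset]

lemma matchCount_eq [Fintype V] (G : SimpleGraph V) (j : ℕ) :
    matchCount G j = (matchFinset G j).card := by
  classical
  rw [matchCount, ← Set.ncard_coe_finset]
  congr 1
  ext M
  simp [mem_matchFinset]

lemma choose_lt_choose_aux {m j : ℕ} (hj : 1 ≤ j) (hm : 2 * j ≤ m) :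
    m.choose (j - 1) < m.choose j := by
  obtain ⟨i, rfl⟩ : ∃ i, j = i + 1 := ⟨j - 1, by omega⟩
  have key := Nat.choose_succ_right_eq m i
  have hpos : 0 < m.choose i := Nat.choose_pos (by omega)
  have h1 : m.choose i * (i + 1) < m.choose i * (m - i) :=
    mul_lt_mul_of_pos_left (by omega) hpos
  rw [← key] at h1
  have := lt_of_mul_lt_mul_right h1 (Nat.zero_le _)
  simpa using this

/-- Cardinality of a fiber: matchings of size `j` whose part outside `F` is exactly `R`. -/
lemma fiber_card [Fintype V] [DecidableEq V] {G : SimpleGraph V} {F R : Finset (Sym2 V)}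
    (hF : IsMatchingFinset G F) (hR : IsMatchingFinset G R) (hRF : ∀ e ∈ R, e ∉ F)
    {j : ℕ} (hrj : R.card ≤ j) :
    ((matchFinset G j).filter (fun M => M \ F = R)).card
      = (F.filter (fun e => ∀ f ∈ R, ∀ x ∈ e, x ∉ f)).card.choose (j - R.card) := by
  classical
  rw [← Finset.card_powersetCard]
  refine Finset.card_bij' (fun M _ => M ∩ F) (fun S _ => R ∪ S) ?_ ?_ ?_ ?_
  · -- forward maps into powersetCard
    intro M hM
    rw [Finset.mem_filter, mem_matchFinset] at hM
    obtain ⟨⟨hMm, hMc⟩, hMF⟩ := hM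
    rw [Finset.mem_powersetCard]
    constructor
    · intro e he
      rw [Finset.mem_inter] at he
      rw [Finset.mem_filter]
      refine ⟨he.2, ?_⟩
      intro f hf x hxe hxf
      rw [← hMF, Finset.mem_sdiff] at hf
      have hne : e ≠ f := by
        rintro rfl; exact hf.2 he.2
      exact hMm.2 (Finset.mem_coe.mpr he.1) (Finset.mem_coe.mpr hf.1) hne x hxe hxf
    · have h1 : (M ∩ F).card + (M \ F).card = M.card := by
        rw [Finset.card_inter_add_card_sdiff]
      rw [hMF, hMc] at h1
      show (M ∩ F).card = j - R.card
      omega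
  · -- backward maps into fiber
    intro S hS
    rw [Finset.mem_powersetCard] at hS
    obtain ⟨hSsub, hSc⟩ := hS
    have hSprop : ∀ e ∈ S, e ∈ F ∧ ∀ f ∈ R, ∀ x ∈ e, x ∉ f := by
      intro e he
      have := hSsub he
      rw [Finset.mem_filter] at this
      exact this
    have hdisj : Disjoint R S := by
      rw [Finset.disjoint_left]
      intro e heR heS
      exact hRF e heR (hSprop e heS).1
    rw [Finset.mem_filter, mem_matchFinset]
    refine ⟨⟨⟨?_, ?_⟩, ?_⟩, ?_⟩
    · intro e he
      rw [Finset.mem_coe, Finset.mem_union] at he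
      rcases he with he | he
      · exact hR.1 (Finset.mem_coe.mpr he)
      · exact hF.1 (Finset.mem_coe.mpr (hSprop e he).1)
    · intro e he f hf hne
      rw [Finset.mem_coe, Finset.mem_union] at he hf
      rcases he with he | he <;> rcases hf with hf | hf
      · exact hR.2 (Finset.mem_coe.mpr he) (Finset.mem_coe.mpr hf) hne
      · intro x hxe hxf
        exact (hSprop f hf).2 e he x hxf hxe
      · intro x hxe hxf
        exact (hSprop e he).2 f hf x hxe hxf
      · exact hF.2 (Finset.mem_coe.mpr (hSprop e he).1)
          (Finset.mem_coe.mpr (hSprop f hf).1) hne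
    · rw [Finset.card_union_of_disjoint hdisj, hSc]
      omega
    · ext e
      rw [Finset.mem_sdiff, Finset.mem_union]
      constructor
      · rintro ⟨he | he, heF⟩
        · exact he
        · exact absurd (hSprop e he).1 heF
      · intro he
        exact ⟨Or.inl he, hRF e he⟩
  · -- left inverse
    intro M hM
    rw [Finset.mem_filter] at hM
    show R ∪ (M ∩ F) = M
    rw [← hM.2]
    exact Finset.sdiff_union_inter M F
  · -- right inverse
    intro S hS
    rw [Finset.mem_powersetCard] at hS
    have hSF : ∀ e ∈ S, e ∈ F := by
      intro e he
      have := hS.1 he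
      rw [Finset.mem_filter] at this
      exact this.1
    ext e
    rw [Finset.mem_inter, Finset.mem_union]
    constructor
    · rintro ⟨he | he, heF⟩
      · exact absurd heF (hRF e he)
      · exact he
    · intro he
      exact ⟨Or.inr he, hSF e he⟩

/-- At most `2 * R.card` edges of a matching `F` meet the edges of `R`. -/
lemma FR_card [Fintype V] [DecidableEq V] {G : SimpleGraph V} {F R : Finset (Sym2 V)}
    (hF : IsMatchingFinset G F) :
    F.card ≤ (F.filter (fun e => ∀ f ∈ R, ∀ x ∈ e, x ∉ f)).card + 2 * R.card := by
  classical
  set FR := F.filter (fun e => ∀ f ∈ R, ∀ x ∈ e, x ∉ f) with hFR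
  have hsub : FR ⊆ F := Finset.filter_subset _ _
  have hcards : (F \ FR).card + FR.card = F.card :=
    Finset.card_sdiff_add_card_eq_card hsub
  have hD : (F \ FR).card ≤ 2 * R.card := by
    set T : Finset V := R.biUnion (fun f => Finset.univ.filter (fun x => x ∈ f)) with hT
    have hTcard : T.card ≤ 2 * R.card := by
      have h1 : T.card ≤ ∑ f ∈ R, (Finset.univ.filter (fun x => x ∈ f)).card :=
        Finset.card_biUnion_le
      have h2 : ∀ f : Sym2 V, (Finset.univ.filter (fun x => x ∈ f)).card ≤ 2 := by
        intro f
        induction f using Sym2.ind with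
        | _ x y =>
          have hsub2 : (Finset.univ.filter (fun z => z ∈ s(x, y))) ⊆ {x, y} := by
            intro z hz
            rw [Finset.mem_filter, Sym2.mem_iff] at hz
            rcases hz.2 with rfl | rfl
            · exact Finset.mem_insert_self _ _
            · exact Finset.mem_insert_of_mem (Finset.mem_singleton_self _)
          calc (Finset.univ.filter (fun z => z ∈ s(x, y))).card
              ≤ ({x, y} : Finset V).card := Finset.card_le_card hsub2
            _ ≤ 2 := (Finset.card_insert_le _ _).trans (by simp)
      calc T.card ≤ ∑ f ∈ R, (Finset.univ.filter (fun x => x ∈ f)).card := h1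
        _ ≤ ∑ _f ∈ R, 2 := Finset.sum_le_sum (fun f _ => h2 f)
        _ = 2 * R.card := by rw [Finset.sum_const, smul_eq_mul, mul_comm]
    rcases (F \ FR).eq_empty_or_nonempty with hE | ⟨e0, he0⟩
    · simp [hE]
    · have hwit : ∀ e ∈ F \ FR, ∃ x, (∃ g ∈ R, x ∈ g) ∧ x ∈ e := by
        intro e he
        rw [Finset.mem_sdiff, hFR, Finset.mem_filter] at he
        have : ¬ (∀ f ∈ R, ∀ x ∈ e, x ∉ f) := fun h => he.2 ⟨he.1, h⟩
        push_neg at this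
        obtain ⟨g, hg, x, hxe, hxg⟩ := this
        exact ⟨x, ⟨g, hg, hxg⟩, hxe⟩
      have hV : Nonempty V := by
        obtain ⟨x, _, _⟩ := hwit e0 he0
        exact ⟨x⟩
      have := hV
      refine le_trans (Finset.card_le_card_of_injOn
        (fun e => if h : ∃ x, (∃ g ∈ R, x ∈ g) ∧ x ∈ e then h.choose else Classical.arbitrary V)
        ?_ ?_) hTcard
      · intro e he
        have h := hwit e he
        simp only [dif_pos h]
        obtain ⟨⟨g, hg, hxg⟩, _⟩ := h.choose_spec
        rw [hT, Finset.mem_coe, Finset.mem_biUnion]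
        exact ⟨g, hg, by rw [Finset.mem_filter]; exact ⟨Finset.mem_univ _, hxg⟩⟩
      · intro e1 he1 e2 he2 heq
        have h1 := hwit e1 he1
        have h2 := hwit e2 he2
        simp only [dif_pos h1, dif_pos h2] at heq
        by_contra hne
        have hx1 : h1.choose ∈ e1 := h1.choose_spec.2
        have hx2 : h1.choose ∈ e2 := heq ▸ h2.choose_spec.2
        have hF1 : e1 ∈ F := (Finset.mem_sdiff.mp he1).1
        have hF2 : e2 ∈ F := (Finset.mem_sdiff.mp he2).1
        exact hF.2 (Finset.mem_coe.mpr hF1) (Finset.mem_coe.mpr hF2) hne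
          h1.choose hx1 hx2
  omega

end Aux

theorem stmt_15 {V : Type*} [Fintype V] (G : SimpleGraph V) (n : ℕ) (hn : 2 ≤ n)
    (hν : ∃ M : Finset (Sym2 V), IsMatchingFinset G M ∧ n ≤ M.card) :
    matchCount G (n / 2 - 1) < matchCount G (n / 2) := by
  classical
  obtain ⟨F, hF, hFc⟩ := hν
  set k := n / 2 with hkdef
  have hk1 : 1 ≤ k := by omega
  have h2k : 2 * k ≤ n := by omega
  have hFcard : 2 * k ≤ F.card := le_trans h2k hFc
  set RR : Finset (Finset (Sym2 V)) :=
    Finset.univ.filter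
      (fun R => IsMatchingFinset G R ∧ (∀ e ∈ R, e ∉ F) ∧ R.card ≤ k - 1) with hRRdef
  have hmemRR : ∀ R : Finset (Sym2 V),
      R ∈ RR ↔ (IsMatchingFinset G R ∧ (∀ e ∈ R, e ∉ F) ∧ R.card ≤ k - 1) := by
    intro R; simp [hRRdef]
  have hRRne : RR.Nonempty := by
    refine ⟨∅, (hmemRR ∅).mpr ⟨⟨?_, ?_⟩, ?_, ?_⟩⟩
    · simp
    · simp
    · simp
    · simp
  have hA : (matchFinset G (k - 1)).card
      = ∑ R ∈ RR, ((matchFinset G (k - 1)).filter (fun M => M \ F = R)).card := by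
    apply Finset.card_eq_sum_card_fiberwise
    intro M hM
    rw [Finset.mem_coe, mem_matchFinset] at hM
    rw [Finset.mem_coe, hmemRR]
    refine ⟨hM.1.subset Finset.sdiff_subset, fun e he => (Finset.mem_sdiff.mp he).2, ?_⟩
    calc (M \ F).card ≤ M.card := Finset.card_le_card Finset.sdiff_subset
      _ = k - 1 := hM.2
  have hB : ∑ R ∈ RR, ((matchFinset G k).filter (fun M => M \ F = R)).card
      ≤ (matchFinset G k).card := by
    set s' := (matchFinset G k).filter (fun M => M \ F ∈ RR) with hs'
    have h1 : s'.card = ∑ R ∈ RR, (s'.filter (fun M => M \ F = R)).card :=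
      Finset.card_eq_sum_card_fiberwise (fun M hM => (Finset.mem_filter.mp (Finset.mem_coe.mp hM)).2)
    have h2 : ∀ R ∈ RR, s'.filter (fun M => M \ F = R)
        = (matchFinset G k).filter (fun M => M \ F = R) := by
      intro R hR
      ext M
      simp only [hs', Finset.mem_filter, and_assoc]
      constructor
      · rintro ⟨h1', _, h3'⟩; exact ⟨h1', h3'⟩
      · rintro ⟨h1', h3'⟩; exact ⟨h1', h3' ▸ hR, h3'⟩
    calc ∑ R ∈ RR, ((matchFinset G k).filter (fun M => M \ F = R)).card
        = ∑ R ∈ RR, (s'.filter (fun M => M \ F = R)).card :=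
          Finset.sum_congr rfl (fun R hR => by rw [h2 R hR])
      _ = s'.card := h1.symm
      _ ≤ _ := Finset.card_le_card (Finset.filter_subset _ _)
  have hterm : ∀ R ∈ RR,
      ((matchFinset G (k - 1)).filter (fun M => M \ F = R)).card
        < ((matchFinset G k).filter (fun M => M \ F = R)).card := by
    intro R hR
    rw [hmemRR] at hR
    obtain ⟨hRm, hRF, hRc⟩ := hR
    have hrk1 : R.card ≤ k - 1 := hRc
    rw [fiber_card hF hRm hRF hrk1,
        fiber_card hF hRm hRF (le_trans hrk1 (Nat.sub_le k 1))]
    have hm := FR_card (R := R) hF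
    have heq : (k - 1) - R.card = (k - R.card) - 1 := by omega
    rw [heq]
    exact choose_lt_choose_aux (by omega) (by omega)
  rw [matchCount_eq, matchCount_eq]
  calc (matchFinset G (k - 1)).card
      = ∑ R ∈ RR, ((matchFinset G (k - 1)).filter (fun M => M \ F = R)).card := hA
    _ < ∑ R ∈ RR, ((matchFinset G k).filter (fun M => M \ F = R)).card :=
        Finset.sum_lt_sum_of_nonempty hRRne hterm
    _ ≤ (matchFinset G k).card := hB
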